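/- arXiv:2001.01125 — 3 statements merged into one kernel-verified Lean document; each statement's English description precedes it below -/
import Mathlib

section
/- (Good Situation 2) In the Online Bin Stretching game Game(m,t,g) with α := (t−1) − g ≥ 0 and m ≥ 3, let (L, I) be a bin configuration for which there exist two bins A and B such that (1) the sum of the loads of all bins other than A and B is at least (m−2)·g − 2α − 1, and (2) there exists a bin C different from A and B whose load is strictly less than α. Then the Algorithm has a winning strategy from (L, I): there is a strategy for the Algorithm that, against every continuation of items for which the full multiset of items remains packable into m bins of capacity g, keeps every bin load at most t − 1. -/
/-- `AddToBin St e b` increases the load of the `b`-th bin of `St` by `e`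
(appending a new bin of load `e` if `b` is beyond the length of `St`). -/
def AddToBin : List ℕ → ℕ → ℕ → List ℕ
  | [], e, _ => [e]
  | x :: s, e, 0 => (x + e) :: s
  | x :: s, e, k + 1 => x :: AddToBin s e k

/-- The load of the most loaded bin. -/
def MaxBinValue (St : List ℕ) : ℕ := St.foldr max 0

/-- `Packable m g ℓ` : the items of `ℓ` can be packed into `m` bins,
each of total size at most `g`. -/
def Packable (m g : ℕ) (ℓ : List ℕ) : Prop :=
  ∃ P : List (List ℕ), P.length = m ∧ (∀ B ∈ P, B.sum ≤ g) ∧ P.flatten.Perm ℓ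

/-- `BinConfig m L I` : `(L, I)` is a bin configuration on `m` bins: `L` is the
`m`-tuple of bin loads and the multiset of items `I` can be packed into the `m`
bins producing exactly the loads `L`. -/
def BinConfig (m : ℕ) (L I : List ℕ) : Prop :=
  L.length = m ∧ ∃ P : List (List ℕ), P.map List.sum = L ∧ P.flatten.Perm I

/-- `RunAlg σ hist St es` : the bin loads obtained from the loads `St` after the
sequence of items `es` has arrived (one at a time) and each item has been packed by
the online strategy `σ`, which chooses a bin given the items sent so far, the
current loads and the incoming item; `hist` is the list of previously sent items. -/
def RunAlg (σ : List ℕ → List ℕ → ℕ → ℕ) : List ℕ → List ℕ → List ℕ → List ℕ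
  | _, St, [] => St
  | hist, St, e :: es => RunAlg σ (e :: hist) (AddToBin St e (σ hist St e)) es

/-- `AlgWins m t g ℓ St` : the Algorithm has a winning strategy in the Online Bin
Stretching game `Game(m,t,g)` from the state with already-sent items `ℓ` and bin
loads `St`: there is an online strategy (always choosing a bin index `< m`) such
that, against every continuation `es` of positive items for which the full multiset
of items remains packable into `m` bins of capacity `g`, every bin load stays at
most `t - 1` (loads only grow, so it suffices that the final loads are at most
`t - 1` for every admissible continuation, each prefix of an admissible continuation
being itself admissible). -/
def AlgWins (m t g : ℕ) (ℓ St : List ℕ) : Prop :=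
  ∃ σ : List ℕ → List ℕ → ℕ → ℕ,
    (∀ hist L e, σ hist L e < m) ∧
    ∀ es : List ℕ, (∀ e ∈ es, 0 < e) → Packable m g (es ++ ℓ) →
      MaxBinValue (RunAlg σ ℓ St es) ≤ t - 1

lemma AddToBin_length (St : List ℕ) (e k : ℕ) (h : k < St.length) :
    (AddToBin St e k).length = St.length := by
  induction St generalizing k with
  | nil => simp at h
  | cons x s ih =>
    cases k with
    | zero => simp [AddToBin]
    | succ k => simp only [AddToBin, List.length_cons]; rw [ih k (by simpa using h)]

lemma AddToBin_getD_same (St : List ℕ) (e k : ℕ) (h : k < St.length) :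
    (AddToBin St e k).getD k 0 = St.getD k 0 + e := by
  induction St generalizing k with
  | nil => simp at h
  | cons x s ih =>
    cases k with
    | zero => simp [AddToBin]
    | succ k => simpa [AddToBin] using ih k (by simpa using h)

lemma AddToBin_getD_ne (St : List ℕ) (e k j : ℕ) (h : k < St.length) (hjk : j ≠ k) :
    (AddToBin St e k).getD j 0 = St.getD j 0 := by
  induction St generalizing k j with
  | nil => simp at h
  | cons x s ih =>
    cases k with
    | zero =>
      cases j with
      | zero => exact absurd rfl hjk
      | succ j => simp [AddToBin]
    | succ k =>
      cases j with
      | zero => simp [AddToBin]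
      | succ j =>
        simpa [AddToBin] using ih k j (by simpa using h) (by omega)

lemma getD_le_sum (L : List ℕ) (i : ℕ) : L.getD i 0 ≤ L.sum := by
  induction L generalizing i with
  | nil => simp
  | cons x s ih =>
    cases i with
    | zero => simp
    | succ i =>
      calc (x :: s).getD (i+1) 0 = s.getD i 0 := rfl
        _ ≤ s.sum := ih i
        _ ≤ x + s.sum := Nat.le_add_left _ _

lemma two_getD_le_sum (L : List ℕ) (a b : ℕ) (hab : a < b) (hb : b < L.length) :
    L.getD a 0 + L.getD b 0 ≤ L.sum := by
  induction L generalizing a b with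
  | nil => simp at hb
  | cons x s ih =>
    cases a with
    | zero =>
      cases b with
      | zero => omega
      | succ b =>
        have := getD_le_sum s b
        simp only [List.getD_cons_zero, List.getD_cons_succ, List.sum_cons]
        omega
    | succ a =>
      cases b with
      | zero => omega
      | succ b =>
        have := ih a b (by omega) (by simpa using hb)
        simp only [List.getD_cons_succ, List.sum_cons]
        omega

lemma maxBinValue_le {L : List ℕ} {k : ℕ} (h : ∀ x ∈ L, x ≤ k) : MaxBinValue L ≤ k := by
  induction L with
  | nil => simp [MaxBinValue]
  | cons x s ih =>
    have h1 := h x (by simp)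
    have h2 : MaxBinValue s ≤ k := ih (fun y hy => h y (by simp [hy]))
    simp only [MaxBinValue, List.foldr_cons] at *
    omega

lemma le_maxBinValue {L : List ℕ} {x : ℕ} (h : x ∈ L) : x ≤ MaxBinValue L := by
  induction L with
  | nil => simp at h
  | cons y s ih =>
    rcases List.mem_cons.1 h with rfl | h
    · simp only [MaxBinValue, List.foldr_cons]; omega
    · have := ih h
      simp only [MaxBinValue, List.foldr_cons] at *
      omega

lemma packable_sum {m g : ℕ} {ℓ : List ℕ} (h : Packable m g ℓ) : ℓ.sum ≤ m * g := by
  obtain ⟨P, hlen, hbins, hperm⟩ := h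
  have h1 : ℓ.sum = (P.map List.sum).sum := by
    rw [← hperm.sum_eq, List.sum_flatten]
  rw [h1]
  calc (P.map List.sum).sum ≤ (P.map List.sum).length * g := by
        apply List.sum_le_card_nsmul
        intro x hx
        obtain ⟨B, hB, rfl⟩ := List.mem_map.1 hx
        exact hbins B hB
    _ = m * g := by rw [List.length_map, hlen]

lemma packable_mem {m g : ℕ} {ℓ : List ℕ} (h : Packable m g ℓ) {e : ℕ} (he : e ∈ ℓ) :
    e ≤ g := by
  obtain ⟨P, hlen, hbins, hperm⟩ := h
  have : e ∈ P.flatten := hperm.mem_iff.2 he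
  obtain ⟨B, hB, heB⟩ := List.mem_flatten.1 this
  exact le_trans (List.single_le_sum (fun _ _ => Nat.zero_le _) _ heB) (hbins B hB)

/-- The Good-Situation-2 strategy: first-fit on bins `a`, `b`, else `c`. -/
def gs2Strat (t a b c : ℕ) (_hist St : List ℕ) (e : ℕ) : ℕ :=
  if St.getD a 0 + e ≤ t - 1 then a else
    if St.getD b 0 + e ≤ t - 1 then b else c

/-- Main invariant-preservation lemma for the GS2 strategy. -/
lemma gs2_main (t g Cap m a b c : ℕ) (L : List ℕ)
    (ht : g + 1 ≤ t)
    (ha : a < m) (hb : b < m) (hc : c < m)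
    (hab : a ≠ b) (hca : c ≠ a) (hcb : c ≠ b)
    (hcload : L.getD c 0 < t - 1 - g)
    (hcap : Cap + L.getD a 0 + L.getD b 0 + 1 ≤ L.sum + 2 * t) :
    ∀ (es hist St : List ℕ),
      (∀ e ∈ es, e ≤ g) →
      St.length = m →
      (∀ i, i < m → St.getD i 0 ≤ t - 1) →
      ((St.getD c 0 = L.getD c 0 ∧
          L.sum + St.getD a 0 + St.getD b 0 + es.sum ≤ Cap + L.getD a 0 + L.getD b 0)
        ∨ (∃ e0, t ≤ St.getD b 0 + e0 ∧
          L.sum + St.getD a 0 + St.getD b 0 + e0 + es.sum ≤ Cap + L.getD a 0 + L.getD b 0)) →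
      (RunAlg (gs2Strat t a b c) hist St es).length = m ∧
        ∀ i, i < m → (RunAlg (gs2Strat t a b c) hist St es).getD i 0 ≤ t - 1 := by
  intro es
  induction es with
  | nil =>
    intro hist St _ hlen hbd _
    exact ⟨hlen, hbd⟩
  | cons e es ih =>
    intro hist St hes hlen hbd hinv
    have heg : e ≤ g := hes e (by simp)
    have hesg : ∀ x ∈ es, x ≤ g := fun x hx => hes x (by simp [hx])
    have haL : a < St.length := by omega
    have hbL : b < St.length := by omega
    have hcL : c < St.length := by omega
    have hstep : ∀ k, RunAlg (gs2Strat t a b c) hist St (e :: es)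
        = RunAlg (gs2Strat t a b c) (e :: hist) (AddToBin St e k) es →
        True := fun _ _ => trivial
    by_cases h1 : St.getD a 0 + e ≤ t - 1
    · -- item goes to bin a
      have hσ : gs2Strat t a b c hist St e = a := by unfold gs2Strat; rw [if_pos h1]
      rw [show RunAlg (gs2Strat t a b c) hist St (e :: es)
            = RunAlg (gs2Strat t a b c) (e :: hist) (AddToBin St e (gs2Strat t a b c hist St e)) es
          from rfl, hσ]
      apply ih (e :: hist) _ hesg
      · rw [AddToBin_length _ _ _ haL]; exact hlen
      · intro i hi
        by_cases hia : i = a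
        · subst hia; rw [AddToBin_getD_same _ _ _ haL]; exact h1
        · rw [AddToBin_getD_ne _ _ _ _ haL hia]; exact hbd i hi
      · have hga : (AddToBin St e a).getD a 0 = St.getD a 0 + e := AddToBin_getD_same _ _ _ haL
        have hgb : (AddToBin St e a).getD b 0 = St.getD b 0 :=
          AddToBin_getD_ne _ _ _ _ haL (Ne.symm hab)
        have hgc : (AddToBin St e a).getD c 0 = St.getD c 0 :=
          AddToBin_getD_ne _ _ _ _ haL hca
        rcases hinv with ⟨hceq, hsum⟩ | ⟨e0, he0, hsum⟩
        · left
          refine ⟨by rw [hgc]; exact hceq, ?_⟩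
          rw [hga, hgb]
          simp only [List.sum_cons] at hsum
          omega
        · right
          refine ⟨e0, by rw [hgb]; exact he0, ?_⟩
          rw [hga, hgb]
          simp only [List.sum_cons] at hsum
          omega
    · by_cases h2 : St.getD b 0 + e ≤ t - 1
      · -- item goes to bin b
        have hσ : gs2Strat t a b c hist St e = b := by
          unfold gs2Strat; rw [if_neg h1, if_pos h2]
        rw [show RunAlg (gs2Strat t a b c) hist St (e :: es)
              = RunAlg (gs2Strat t a b c) (e :: hist) (AddToBin St e (gs2Strat t a b c hist St e)) es
            from rfl, hσ]
        apply ih (e :: hist) _ hesg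
        · rw [AddToBin_length _ _ _ hbL]; exact hlen
        · intro i hi
          by_cases hib : i = b
          · subst hib; rw [AddToBin_getD_same _ _ _ hbL]; exact h2
          · rw [AddToBin_getD_ne _ _ _ _ hbL hib]; exact hbd i hi
        · have hga : (AddToBin St e b).getD a 0 = St.getD a 0 :=
            AddToBin_getD_ne _ _ _ _ hbL hab
          have hgb : (AddToBin St e b).getD b 0 = St.getD b 0 + e :=
            AddToBin_getD_same _ _ _ hbL
          have hgc : (AddToBin St e b).getD c 0 = St.getD c 0 :=
            AddToBin_getD_ne _ _ _ _ hbL hcb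
          rcases hinv with ⟨hceq, hsum⟩ | ⟨e0, he0, hsum⟩
          · left
            refine ⟨by rw [hgc]; exact hceq, ?_⟩
            rw [hga, hgb]
            simp only [List.sum_cons] at hsum
            omega
          · right
            refine ⟨e0, by rw [hgb]; omega, ?_⟩
            rw [hga, hgb]
            simp only [List.sum_cons] at hsum
            omega
      · -- item goes to bin c
        have hσ : gs2Strat t a b c hist St e = c := by
          unfold gs2Strat; rw [if_neg h1, if_neg h2]
        rw [show RunAlg (gs2Strat t a b c) hist St (e :: es)
              = RunAlg (gs2Strat t a b c) (e :: hist) (AddToBin St e (gs2Strat t a b c hist St e)) es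
            from rfl, hσ]
        have hta : t ≤ St.getD a 0 + e := by omega
        have htb : t ≤ St.getD b 0 + e := by omega
        rcases hinv with ⟨hceq, hsum⟩ | ⟨e0, he0, hsum⟩
        · -- first item into c
          apply ih (e :: hist) _ hesg
          · rw [AddToBin_length _ _ _ hcL]; exact hlen
          · intro i hi
            by_cases hicc : i = c
            · subst hicc
              rw [AddToBin_getD_same _ _ _ hcL, hceq]
              omega
            · rw [AddToBin_getD_ne _ _ _ _ hcL hicc]; exact hbd i hi
          · right
            have hga : (AddToBin St e c).getD a 0 = St.getD a 0 :=
              AddToBin_getD_ne _ _ _ _ hcL (Ne.symm hca)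
            have hgb : (AddToBin St e c).getD b 0 = St.getD b 0 :=
              AddToBin_getD_ne _ _ _ _ hcL (Ne.symm hcb)
            refine ⟨e, by rw [hgb]; exact htb, ?_⟩
            rw [hga, hgb]
            simp only [List.sum_cons] at hsum
            omega
        · -- second item into c: contradiction with the volume bound
          exfalso
          simp only [List.sum_cons] at hsum
          omega

/-- Good Situation 2: in `Game(m,t,g)` with `m ≥ 3` and `α = (t-1) - g ≥ 0`, let
`(L, I)` be a bin configuration (with all loads at most `t-1`, as for every state
reached in the game) for which there exist two bins `a ≠ b` such that (1) the sum
of the loads of all bins other than `a` and `b` is at least `(m-2)·g - 2α - 1`, and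
(2) there is a bin `c ∉ {a, b}` whose load is strictly less than `α`.  Then the
Algorithm has a winning strategy from `(L, I)`: there is a strategy keeping every
bin load at most `t - 1` against every continuation that stays packable into `m`
bins of capacity `g`. -/
theorem good_situation_two (m t g : ℕ) (hm : 3 ≤ m) (ht : g + 1 ≤ t)
    (L I : List ℕ) (hconf : BinConfig m L I) (hsafe : MaxBinValue L ≤ t - 1)
    (a b : ℕ) (ha : a < m) (hb : b < m) (hab : a ≠ b)
    (hsum : (m - 2) * g - 2 * ((t - 1) - g) - 1 ≤ L.sum - L.getD a 0 - L.getD b 0)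
    (c : ℕ) (hc : c < m) (hca : c ≠ a) (hcb : c ≠ b)
    (hcload : L.getD c 0 < (t - 1) - g) :
    AlgWins m t g I L := by
  have hlenL : L.length = m := hconf.1
  have hIsum : I.sum = L.sum := by
    obtain ⟨P, hP1, hP2⟩ := hconf.2
    rw [← hP2.sum_eq, List.sum_flatten, hP1]
  have hpair : L.getD a 0 + L.getD b 0 ≤ L.sum := by
    rcases Nat.lt_or_ge a b with h | h
    · exact two_getD_le_sum L a b h (by omega)
    · have hba : b < a := by omega
      have := two_getD_le_sum L b a hba (by omega)
      omega
  have hcap : m * g + L.getD a 0 + L.getD b 0 + 1 ≤ L.sum + 2 * t := by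
    have hmg : m * g = (m - 2) * g + 2 * g := by
      have h2 : m - 2 + 2 = m := by omega
      calc m * g = (m - 2 + 2) * g := by rw [h2]
        _ = (m - 2) * g + 2 * g := by ring
    set k := (m - 2) * g with hk
    omega
  have hLbd : ∀ i, i < m → L.getD i 0 ≤ t - 1 := by
    intro i hi
    have hi' : i < L.length := by omega
    have hmem : L.getD i 0 ∈ L := by
      rw [List.getD_eq_getElem L 0 hi']
      exact List.getElem_mem hi'
    exact le_trans (le_maxBinValue hmem) hsafe
  refine ⟨gs2Strat t a b c, ?_, ?_⟩
  · intro hist Lx e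
    unfold gs2Strat
    split
    · exact ha
    · split
      · exact hb
      · exact hc
  · intro es hpos hpack
    have hes : ∀ e ∈ es, e ≤ g := fun e he => packable_mem hpack (by simp [he])
    have hsum2 : es.sum + I.sum ≤ m * g := by
      have := packable_sum hpack
      simpa using this
    have hbase : (L.getD c 0 = L.getD c 0 ∧
        L.sum + L.getD a 0 + L.getD b 0 + es.sum ≤ m * g + L.getD a 0 + L.getD b 0)
      ∨ (∃ e0, t ≤ L.getD b 0 + e0 ∧
        L.sum + L.getD a 0 + L.getD b 0 + e0 + es.sum ≤ m * g + L.getD a 0 + L.getD b 0) := by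
      left
      exact ⟨rfl, by omega⟩
    obtain ⟨hlenR, hbdR⟩ := gs2_main t g (m * g) m a b c L ht ha hb hc hab hca hcb hcload hcap
      es I L hes hlenL hLbd hbase
    apply maxBinValue_le
    intro x hx
    obtain ⟨i, hi, rfl⟩ := List.mem_iff_getElem.1 hx
    rw [← List.getD_eq_getElem _ 0 hi]
    exact hbdR i (by omega)
end

section
/- (Large item heuristic) In the Online Bin Stretching game Game(m,t,g), let (L, I) be a bin configuration with loads sorted in non-increasing order L_1 ≥ … ≥ L_m, and suppose the k-th bin has load l := L_k ≥ t − g. Let i be a positive integer item size such that (1) i + l ≥ t, and (2) for every bin index b with k < b ≤ m, two items of size i cannot both be packed into bin b without reaching the target, i.e., 2i + L_b ≥ t. If the multiset I together with m − k + 1 additional items of size i can be packed into m bins each of total size at most g, then the Adversary has a winning strategy from (L, I): sending m − k + 1 items of size i forces some bin to reach load at least t, so LowerBoundBS(I, L) holds. -/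
/-- `AdvWins m t g ℓ St` : the Adversary has a winning strategy in the Online Bin
Stretching game `Game(m,t,g)` starting from the previously sent items `ℓ` and the
current bin loads `St` — the property `LowerBoundBS(ℓ, St)`.  Either the Adversary
has already won (some bin has load at least `t`, and all items sent so far can be
packed into `m` bins of capacity `g`), or the Adversary can send some positive item
`e` such that whatever bin `b < m` the Algorithm packs it into, the Adversary still
has a winning strategy. -/
inductive AdvWins (m t g : ℕ) : List ℕ → List ℕ → Prop
  | win (ℓ St : List ℕ) : t ≤ MaxBinValue St → Packable m g ℓ → AdvWins m t g ℓ St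
  | step (ℓ St : List ℕ) (e : ℕ) : 0 < e →
      (∀ b, b < m → AdvWins m t g (e :: ℓ) (AddToBin St e b)) →
      AdvWins m t g ℓ St

lemma addToBin_length (St : List ℕ) (e b : ℕ) (h : b < St.length) :
    (AddToBin St e b).length = St.length := by
  induction St generalizing b with
  | nil => simp at h
  | cons x s ih =>
    cases b with
    | zero => simp [AddToBin]
    | succ k => simp [AddToBin, ih k (by simpa using h)]

lemma addToBin_getD (St : List ℕ) (e b : ℕ) (h : b < St.length) :
    (AddToBin St e b).getD b 0 = St.getD b 0 + e := by
  induction St generalizing b with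
  | nil => simp at h
  | cons x s ih =>
    cases b with
    | zero => simp [AddToBin]
    | succ k => simpa [AddToBin] using ih k (by simpa using h)

lemma addToBin_getD_ne (St : List ℕ) (e b b' : ℕ) (h : b < St.length) (hne : b ≠ b') :
    (AddToBin St e b).getD b' 0 = St.getD b' 0 := by
  induction St generalizing b b' with
  | nil => simp at h
  | cons x s ih =>
    cases b with
    | zero =>
      cases b' with
      | zero => exact absurd rfl hne
      | succ j => simp [AddToBin]
    | succ k =>
      cases b' with
      | zero => simp [AddToBin]
      | succ j =>
        simpa [AddToBin] using ih k j (by simpa using h) (by omega)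

lemma getD_le_maxBinValue (St : List ℕ) (b : ℕ) : St.getD b 0 ≤ MaxBinValue St := by
  induction St generalizing b with
  | nil => simp [MaxBinValue]
  | cons x s ih =>
    cases b with
    | zero => simp [MaxBinValue]
    | succ k =>
      have := ih k
      simp only [MaxBinValue] at *
      simpa using Or.inr this

lemma maxBinValue_le_addToBin (St : List ℕ) (e b : ℕ) :
    MaxBinValue St ≤ MaxBinValue (AddToBin St e b) := by
  induction St generalizing b with
  | nil => simp [MaxBinValue]
  | cons x s ih =>
    cases b with
    | zero =>
      simp only [AddToBin, MaxBinValue, List.foldr]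
      exact max_le_max (Nat.le_add_right _ _) le_rfl
    | succ k =>
      simp only [AddToBin, MaxBinValue, List.foldr]
      exact max_le_max le_rfl (ih k)

lemma sorted_getD_le (L : List ℕ) (hs : L.Pairwise (· ≥ ·)) (a b : ℕ)
    (hab : a ≤ b) (hb : b < L.length) : L.getD b 0 ≤ L.getD a 0 := by
  have ha : a < L.length := lt_of_le_of_lt hab hb
  rw [List.getD_eq_getElem L 0 hb, List.getD_eq_getElem L 0 ha]
  exact hs.rel_get_of_le (by exact hab)

/-- Large item heuristic: in `Game(m,t,g)`, let `(L, I)` be a bin configuration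
with loads sorted in non-increasing order `L₁ ≥ … ≥ L_m`, and suppose the `k`-th
bin (`1 ≤ k ≤ m`) has load `l = L_k ≥ t - g`.  Let `i` be a positive item size with
(1) `i + l ≥ t` and (2) for every bin `b` with `k < b ≤ m`, `2·i + L_b ≥ t`.  If
`I` together with `m - k + 1` additional items of size `i` can be packed into `m`
bins each of total size at most `g`, then the Adversary has a winning strategy from
`(L, I)` (sending `m - k + 1` items of size `i` forces some bin to reach load at
least `t`), i.e. `LowerBoundBS(I, L)` holds. -/
theorem large_item_heuristic (m t g : ℕ) (hm : 0 < m)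
    (L I : List ℕ) (hconf : BinConfig m L I) (hsorted : L.Pairwise (· ≥ ·))
    (k : ℕ) (hk1 : 1 ≤ k) (hkm : k ≤ m)
    (hl : t - g ≤ L.getD (k - 1) 0)
    (i : ℕ) (hi : 0 < i)
    (h1 : t ≤ i + L.getD (k - 1) 0)
    (h2 : ∀ b, k < b → b ≤ m → t ≤ 2 * i + L.getD (b - 1) 0)
    (hpack : Packable m g (List.replicate (m - k + 1) i ++ I)) :
    AdvWins m t g I L := by
  obtain ⟨hL, -⟩ := hconf
  have key : ∀ n, n ≤ m - k + 1 → ∀ St : List ℕ, St.length = m →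
      (t ≤ MaxBinValue St ∨
        ∃ S : Finset ℕ, S.card + n = m - k + 1 ∧
          (∀ b ∈ S, k ≤ b ∧ b < m ∧ St.getD b 0 = L.getD b 0 + i) ∧
          (∀ b, b < m → b ∉ S → St.getD b 0 = L.getD b 0)) →
      AdvWins m t g (List.replicate (m - k + 1 - n) i ++ I) St := by
    intro n
    induction n with
    | zero =>
      intro _ St hSt hinv
      rcases hinv with hwin | ⟨S, hcard, hS, _⟩
      · simpa using AdvWins.win _ _ hwin hpack
      · exfalso
        have hsub : S ⊆ Finset.Ico k m := fun b hb => by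
          obtain ⟨h1, h2, _⟩ := hS b hb
          exact Finset.mem_Ico.mpr ⟨h1, h2⟩
        have := Finset.card_le_card hsub
        rw [Nat.card_Ico] at this
        omega
    | succ n ih =>
      intro hn St hSt hinv
      refine AdvWins.step _ _ i hi fun b hb => ?_
      have hrep : (i :: (List.replicate (m - k + 1 - (n + 1)) i ++ I)) =
          List.replicate (m - k + 1 - n) i ++ I := by
        have : m - k + 1 - n = (m - k + 1 - (n + 1)) + 1 := by omega
        rw [this, List.replicate_succ]
        simp
      rw [hrep]
      have hbSt : b < St.length := by omega
      apply ih (by omega) _ (by rw [addToBin_length _ _ _ hbSt, hSt])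
      rcases hinv with hwin | ⟨S, hcard, hS, hout⟩
      · exact Or.inl (le_trans hwin (maxBinValue_le_addToBin St i b))
      by_cases hbS : b ∈ S
      · -- second item in bin b > k : win
        obtain ⟨hkb, hbm, heq⟩ := hS b hbS
        left
        have hval : (AddToBin St i b).getD b 0 = L.getD b 0 + i + i := by
          rw [addToBin_getD _ _ _ hbSt, heq]
        have ht : t ≤ 2 * i + L.getD b 0 := by
          have := h2 (b + 1) (by omega) (by omega)
          simpa using this
        calc t ≤ (AddToBin St i b).getD b 0 := by omega
          _ ≤ _ := getD_le_maxBinValue _ _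
      by_cases hbk : b < k
      · -- item in a bin of index < k : win
        left
        have hval : (AddToBin St i b).getD b 0 = L.getD b 0 + i := by
          rw [addToBin_getD _ _ _ hbSt, hout b hb hbS]
        have hmono : L.getD (k - 1) 0 ≤ L.getD b 0 :=
          sorted_getD_le L hsorted b (k - 1) (by omega) (by omega)
        calc t ≤ (AddToBin St i b).getD b 0 := by omega
          _ ≤ _ := getD_le_maxBinValue _ _
      · -- first item in bin b ≥ k : record it
        right
        refine ⟨insert b S, ?_, ?_, ?_⟩
        · rw [Finset.card_insert_of_notMem hbS]; omega
        · intro b' hb'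
          rcases Finset.mem_insert.mp hb' with rfl | hb'S
          · exact ⟨by omega, hb, by rw [addToBin_getD _ _ _ hbSt, hout _ hb hbS]⟩
          · obtain ⟨h1, h2', h3⟩ := hS b' hb'S
            refine ⟨h1, h2', ?_⟩
            rw [addToBin_getD_ne _ _ _ _ hbSt (by rintro rfl; exact hbS hb'S), h3]
        · intro b' hb'm hb'S
          have hne : b ≠ b' := by rintro rfl; exact hb'S (Finset.mem_insert_self _ _)
          rw [addToBin_getD_ne _ _ _ _ hbSt hne,
            hout b' hb'm (fun h => hb'S (Finset.mem_insert_of_mem h))]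
  have := key (m - k + 1) le_rfl L hL
    (Or.inr ⟨∅, by simp, by simp, fun b _ _ => rfl⟩)
  simpa using this
end

section
/- (Corollary) Let m, t, g be natural numbers with m > 0. If LowerBoundCoq holds, i.e., there exists a list s of at most m zeros such that OnlineInfeasible (m·g + 2) [] s holds, then LowerBoundBS holds for Game(m,t,g), i.e., the Adversary has a winning strategy in the Online Bin Stretching game Game(m,t,g) from the empty item list and all-zero bin loads. -/
/-- The load of a bin given the list of its items. -/
def BinSum (B : List ℕ) : ℕ := B.sum

/-- The largest bin load of a packing, given as a list of bins (lists of items). -/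
def MaxBinSum (P : List (List ℕ)) : ℕ := (P.map BinSum).foldr max 0

/-- `CompletePacking ℓ P` : the packing `P` uses at least all the items of `ℓ`:
every natural number occurs in the concatenation of `P` at least as many times
as in `ℓ`. -/
def CompletePacking (ℓ : List ℕ) (P : List (List ℕ)) : Prop :=
  ∀ e, ℓ.count e ≤ P.flatten.count e

/-- `SolutionPacking m g ℓ P` : `P` is a certificate that the items of `ℓ` can be
packed into `m` bins of capacity `g`. -/
def SolutionPacking (m g : ℕ) (ℓ : List ℕ) (P : List (List ℕ)) : Prop :=
  CompletePacking ℓ P ∧ P.length = m ∧ MaxBinSum P ≤ g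

/-- The inductive predicate `OnlineInfeasible m t g X ℓ St` of the Coq
formalization: either (Overflow) some bin load of `St` is at least `t` and there
is a packing certificate for `ℓ`, or (Deadend) `St` has length at most `m` and
there is a positive item `e` (here an explicit constructor argument, which is
equivalent to the existential quantification of the Coq definition) such that,
whatever bin `b < m` it is packed into, the resulting state is again
`OnlineInfeasible` with fuel decreased by one. -/
inductive OnlineInfeasible (m t g : ℕ) : ℕ → List ℕ → List ℕ → Prop
  | overflow (X : ℕ) (ℓ St : List ℕ) : t ≤ MaxBinValue St →
      (∃ P, SolutionPacking m g ℓ P) → OnlineInfeasible m t g X ℓ St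
  | deadend (X : ℕ) (ℓ St : List ℕ) (e : ℕ) : St.length ≤ m → 0 < e →
      (∀ b, b < m → OnlineInfeasible m t g X (e :: ℓ) (AddToBin St e b)) →
      OnlineInfeasible m t g (X + 1) ℓ St

/-- `Iszero s` : `s` is a list of length at most `m` all of whose elements are
zero (starting bin loads, where some bins may be omitted). -/
def Iszero (m : ℕ) (s : List ℕ) : Prop :=
  s.length ≤ m ∧ ∀ e ∈ s, e = 0

/-! Auxiliary lemmas -/

lemma addToBin_of_le (e : ℕ) : ∀ (St : List ℕ) (b : ℕ), St.length ≤ b →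
    AddToBin St e b = St ++ [e] := by
  intro St
  induction St with
  | nil => intro b _; cases b <;> rfl
  | cons x s ih =>
      intro b hb
      cases b with
      | zero => simp at hb
      | succ k =>
          simp only [AddToBin, List.cons_append, List.cons.injEq, true_and]
          exact ih k (by simpa using hb)

lemma addToBin_at (e : ℕ) : ∀ (l1 : List ℕ) (v : ℕ) (l2 : List ℕ),
    AddToBin (l1 ++ v :: l2) e l1.length = l1 ++ (v + e) :: l2 := by
  intro l1
  induction l1 with
  | nil => intro v l2; rfl
  | cons x l ih => intro v l2; simp [AddToBin, ih]

lemma maxBinValue_perm {l l' : List ℕ} (h : l.Perm l') :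
    MaxBinValue l = MaxBinValue l' := by
  unfold MaxBinValue
  induction h with
  | nil => rfl
  | cons x _ ih => simp [ih]
  | swap x y l => simp [List.foldr, max_left_comm]
  | trans _ _ ih1 ih2 => rw [ih1, ih2]

lemma maxBinValue_append_zeros (St : List ℕ) (k : ℕ) :
    MaxBinValue (St ++ List.replicate k 0) = MaxBinValue St := by
  induction St with
  | nil =>
      simp only [List.nil_append]
      induction k with
      | zero => rfl
      | succ n ih =>
          rw [List.replicate_succ]
          unfold MaxBinValue at *
          simp [ih]
  | cons x s ih =>
      simp only [List.cons_append, MaxBinValue, List.foldr_cons] at ih ⊢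
      rw [ih]

lemma binSum_le_maxBinSum {P : List (List ℕ)} {B : List ℕ} (h : B ∈ P) :
    BinSum B ≤ MaxBinSum P := by
  induction P with
  | nil => simp at h
  | cons C P ih =>
      rcases List.mem_cons.1 h with rfl | h
      · exact le_max_left _ _
      · exact le_trans (ih h) (le_max_right _ _)

lemma sublist_flatten_packing : ∀ (P : List (List ℕ)) (l : List ℕ),
    l.Sublist P.flatten → ∃ P' : List (List ℕ), P'.length = P.length ∧
      P'.flatten = l ∧ ∀ B' ∈ P', ∃ B ∈ P, B'.Sublist B := by
  intro P
  induction P with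
  | nil =>
      intro l hl
      simp only [List.flatten_nil, List.sublist_nil] at hl
      exact ⟨[], rfl, by simp [hl], by simp⟩
  | cons B P ih =>
      intro l hl
      rw [List.flatten_cons, List.sublist_append_iff] at hl
      obtain ⟨x, y, rfl, hx, hy⟩ := hl
      obtain ⟨P', hlen, hfl, hsub⟩ := ih y hy
      refine ⟨x :: P', by simp [hlen], by simp [hfl], ?_⟩
      intro B' hB'
      rcases List.mem_cons.1 hB' with rfl | hB'
      · exact ⟨B, List.mem_cons_self, hx⟩
      · obtain ⟨C, hC, hC'⟩ := hsub B' hB'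
        exact ⟨C, List.mem_cons_of_mem _ hC, hC'⟩

lemma solutionPacking_packable {m g : ℕ} {ℓ : List ℕ} {P : List (List ℕ)}
    (h : SolutionPacking m g ℓ P) : Packable m g ℓ := by
  obtain ⟨hcp, hlen, hmax⟩ := h
  have hsp : ℓ.Subperm P.flatten := by
    rw [List.subperm_ext_iff]
    intro x _
    exact hcp x
  obtain ⟨ℓ', hperm, hsl⟩ := hsp
  obtain ⟨P', hlen', hfl, hsub⟩ := sublist_flatten_packing P ℓ' hsl
  refine ⟨P', by rw [hlen', hlen], ?_, by rw [hfl]; exact hperm⟩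
  intro B' hB'
  obtain ⟨B, hB, hBB⟩ := hsub B' hB'
  calc B'.sum ≤ B.sum := hBB.sum_le_sum (fun a _ => Nat.zero_le a)
    _ ≤ MaxBinSum P := binSum_le_maxBinSum hB
    _ ≤ g := hmax

lemma length_addToBin_lt (St : List ℕ) (e b : ℕ) (hb : b < St.length) :
    (AddToBin St e b).length = St.length := by
  induction St generalizing b with
  | nil => simp at hb
  | cons x s ih =>
      cases b with
      | zero => rfl
      | succ k => simpa [AddToBin] using ih k (by simpa using hb)

/-- Main transfer lemma. -/
lemma onlineInfeasible_advWins {m t g : ℕ} {X : ℕ} {ℓ St : List ℕ}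
    (h : OnlineInfeasible m t g X ℓ St) :
    ∀ St' : List ℕ, St'.length ≤ m → (∃ k, St'.Perm (St ++ List.replicate k 0)) →
      AdvWins m t g ℓ St' := by
  induction h with
  | overflow X ℓ St ht hP =>
      rintro St' _ ⟨k, hperm⟩
      refine AdvWins.win _ _ ?_ (solutionPacking_packable hP.choose_spec)
      rw [maxBinValue_perm hperm, maxBinValue_append_zeros]
      exact ht
  | deadend X ℓ St e hStm he hrec ih =>
      rintro St' hlen' ⟨k, hperm⟩
      have hStlen : St'.length = St.length + k := by
        simpa using hperm.length_eq
      refine AdvWins.step _ _ e he ?_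
      intro b' hb'
      by_cases hcase : b' < St'.length
      · set v := St'[b'] with hv
        have hsplit : St' = St'.take b' ++ v :: St'.drop (b' + 1) := by
          conv_lhs => rw [← List.take_append_drop b' St']
          rw [List.getElem_cons_drop]
        set l1 := St'.take b' with hl1
        set l2 := St'.drop (b' + 1) with hl2
        have hlen1 : l1.length = b' := List.length_take_of_le (le_of_lt hcase)
        have hadd : AddToBin St' e b' = l1 ++ (v + e) :: l2 := by
          conv_lhs => rw [hsplit]
          rw [← hlen1, addToBin_at]
        have hperm2 : (v :: (l1 ++ l2)).Perm (St ++ List.replicate k 0) := by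
          refine List.Perm.trans ?_ hperm
          conv_rhs => rw [hsplit]
          exact (List.perm_middle).symm
        have hvmem : v ∈ St ++ List.replicate k 0 :=
          hperm2.mem_iff.1 (List.mem_cons_self)
        rcases List.mem_append.1 hvmem with hvSt | hvpad
        · -- v comes from St
          obtain ⟨s1, s2, rfl⟩ := List.append_of_mem hvSt
          have hb : s1.length < m := by
            have h1 := hStm
            simp only [List.length_append, List.length_cons] at h1
            omega
          have h1 : (v :: (l1 ++ l2)).Perm (v :: (s1 ++ (s2 ++ List.replicate k 0))) := by
            refine hperm2.trans ?_
            rw [List.append_assoc, List.cons_append]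
            exact List.perm_middle
          have hcancel : (l1 ++ l2).Perm (s1 ++ (s2 ++ List.replicate k 0)) :=
            h1.cons_inv
          have hkey : (AddToBin St' e b').Perm
              (AddToBin (s1 ++ v :: s2) e s1.length ++ List.replicate k 0) := by
            rw [hadd, addToBin_at, List.append_assoc, List.cons_append]
            have p1 : (l1 ++ (v + e) :: l2).Perm ((v + e) :: (l1 ++ l2)) :=
              List.perm_middle
            have p2 : ((v + e) :: (l1 ++ l2)).Perm
                ((v + e) :: (s1 ++ (s2 ++ List.replicate k 0))) := hcancel.cons _
            exact (p1.trans p2).trans List.perm_middle.symm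
          refine ih s1.length hb _ ?_ ⟨k, hkey⟩
          rw [length_addToBin_lt _ _ _ hcase]
          exact hlen'
        · -- v is a padded zero
          have hv0 : v = 0 := List.eq_of_mem_replicate hvpad
          have hkpos : 0 < k := by
            rcases Nat.eq_zero_or_pos k with rfl | hp
            · simp at hvpad
            · exact hp
          have hb : St.length < m := by omega
          have ek : List.replicate k (0 : ℕ) = 0 :: List.replicate (k - 1) 0 := by
            rw [← List.replicate_succ]
            congr 1
            omega
          have h1 : (v :: (l1 ++ l2)).Perm (0 :: (St ++ List.replicate (k - 1) 0)) := by
            refine hperm2.trans ?_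
            rw [ek]
            exact List.perm_middle
          have hcancel : (l1 ++ l2).Perm (St ++ List.replicate (k - 1) 0) := by
            rw [hv0] at h1
            exact h1.cons_inv
          have hkey : (AddToBin St' e b').Perm
              (AddToBin St e St.length ++ List.replicate (k - 1) 0) := by
            rw [hadd, addToBin_of_le e St St.length le_rfl, hv0,
              List.append_assoc, List.singleton_append]
            have p1 : (l1 ++ (0 + e) :: l2).Perm ((0 + e) :: (l1 ++ l2)) :=
              List.perm_middle
            have p2 : ((0 + e) :: (l1 ++ l2)).Perm
                (e :: (St ++ List.replicate (k - 1) 0)) := by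
              rw [Nat.zero_add]
              exact hcancel.cons _
            exact (p1.trans p2).trans List.perm_middle.symm
          refine ih St.length hb _ ?_ ⟨k - 1, hkey⟩
          rw [length_addToBin_lt _ _ _ hcase]
          exact hlen'
      · -- b' beyond St': item goes to a new bin
        push_neg at hcase
        have hb : St.length < m := by omega
        have hadd : AddToBin St' e b' = St' ++ [e] := addToBin_of_le e St' b' hcase
        have hkey : (AddToBin St' e b').Perm
            (AddToBin St e St.length ++ List.replicate k 0) := by
          rw [hadd, addToBin_of_le e St St.length le_rfl, List.append_assoc,
            List.singleton_append]
          have q1 : (St' ++ [e]).Perm ((St ++ List.replicate k 0) ++ [e]) :=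
            hperm.append_right _
          refine q1.trans ?_
          rw [List.append_assoc]
          exact List.Perm.append_left St List.perm_append_comm
        refine ih St.length hb _ ?_ ⟨k, hkey⟩
        rw [hadd]
        simp only [List.length_append, List.length_singleton]
        omega

/-- Corollary: `LowerBoundCoq` implies `LowerBoundBS`.  If there exists a list `s`
of at most `m` zeros such that `OnlineInfeasible (m·g + 2) [] s` holds, then the
Adversary has a winning strategy in the Online Bin Stretching game `Game(m,t,g)`
from the empty item list and all-zero bin loads. -/
theorem lowerBoundCoq_implies_lowerBoundBS (m t g : ℕ) (hm : 0 < m)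
    (h : ∃ s : List ℕ, Iszero m s ∧ OnlineInfeasible m t g (m * g + 2) [] s) :
    AdvWins m t g [] (List.replicate m 0) := by
  obtain ⟨s, ⟨hslen, hszero⟩, hOI⟩ := h
  refine onlineInfeasible_advWins hOI (List.replicate m 0) (by simp) ⟨m - s.length, ?_⟩
  have hs : s = List.replicate s.length 0 := List.eq_replicate_of_mem hszero
  rw [hs, List.length_replicate, ← List.replicate_add,
    Nat.add_sub_cancel' hslen]
end
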